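/- arXiv:2405.10094 — 2 statements merged into one kernel-verified Lean document; each statement's English description precedes it below -/
import Mathlib

section
/- Every finite relational instance has a core: a sub-instance J ⊆ I such that I maps homomorphically into J and every homomorphism from J to itself is an isomorphism. -/
structure Inst (T : Type) where
  un : ℕ → T → Prop
  bin : ℕ → T → T → Prop

def IsHom {T : Type} (h : T → T) (I J : Inst T) : Prop :=
  (∀ p t, I.un p t → J.un p (h t)) ∧ (∀ p t s, I.bin p t s → J.bin p (h t) (h s))

/-- The terms occurring in the atoms of an instance. -/
def terms {T : Type} (I : Inst T) : Set T :=
  {t | (∃ p, I.un p t) ∨ (∃ p s, I.bin p t s) ∨ (∃ p s, I.bin p s t)}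

def SubInst {T : Type} (J I : Inst T) : Prop :=
  (∀ p t, J.un p t → I.un p t) ∧ (∀ p t s, J.bin p t s → I.bin p t s)

/-- `g` is an isomorphism from `J` to `K` (bijective on terms, inverse also a homomorphism). -/
def IsIsoOn {T : Type} (g : T → T) (J K : Inst T) : Prop :=
  IsHom g J K ∧ Set.BijOn g (terms J) (terms K) ∧
    ∃ g', IsHom g' K J ∧ Set.InvOn g' g (terms J) (terms K)

/-- `J` is a core of `I`: a sub-instance into which `I` maps homomorphically and
all of whose endo-homomorphisms are isomorphisms. -/
def IsCore {T : Type} (I J : Inst T) : Prop :=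
  SubInst J I ∧ (∃ h, IsHom h I J) ∧ ∀ g, IsHom g J J → IsIsoOn g J J

/-- The image instance of `I` under `h`. -/
def img {T : Type} (h : T → T) (I : Inst T) : Inst T where
  un p t := ∃ s, I.un p s ∧ t = h s
  bin p t s := ∃ a b, I.bin p a b ∧ t = h a ∧ s = h b

def unSet {T : Type} (J : Inst T) : Set (ℕ × T) := {pt | J.un pt.1 pt.2}
def binSet {T : Type} (J : Inst T) : Set (ℕ × T × T) := {x | J.bin x.1 x.2.1 x.2.2}

lemma unSet_img {T : Type} (h : T → T) (I : Inst T) :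
    unSet (img h I) = (fun pt : ℕ × T => (pt.1, h pt.2)) '' unSet I := by
  ext ⟨p, t⟩
  constructor
  · rintro ⟨s, hs, rfl⟩; exact ⟨⟨p, s⟩, hs, rfl⟩
  · rintro ⟨⟨q, s⟩, hs, heq⟩
    cases heq
    exact ⟨s, hs, rfl⟩

lemma binSet_img {T : Type} (h : T → T) (I : Inst T) :
    binSet (img h I) = (fun x : ℕ × T × T => (x.1, h x.2.1, h x.2.2)) '' binSet I := by
  ext ⟨p, t, s⟩
  constructor
  · rintro ⟨a, b, hab, rfl, rfl⟩; exact ⟨⟨p, a, b⟩, hab, rfl⟩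
  · rintro ⟨⟨q, a, b⟩, hab, heq⟩
    cases heq
    exact ⟨a, b, hab, rfl, rfl⟩

lemma isHom_comp {T : Type} {f g : T → T} {I J K : Inst T}
    (hf : IsHom f I J) (hg : IsHom g J K) : IsHom (g ∘ f) I K :=
  ⟨fun p t ht => hg.1 p (f t) (hf.1 p t ht),
   fun p t s hts => hg.2 p (f t) (f s) (hf.2 p t s hts)⟩

lemma isHom_iterate {T : Type} {g : T → T} {J : Inst T} (hg : IsHom g J J) :
    ∀ n, IsHom (g^[n]) J J
  | 0 => ⟨fun _ _ ht => ht, fun _ _ _ ht => ht⟩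
  | n + 1 => by
      have := isHom_comp hg (isHom_iterate hg n)
      simpa [Function.iterate_succ] using this

theorem finite_instance_has_core {T : Type} (I : Inst T)
    (hfin_un : {pt : ℕ × T | I.un pt.1 pt.2}.Finite)
    (hfin_bin : {pts : ℕ × T × T | I.bin pts.1 pts.2.1 pts.2.2}.Finite) :
    ∃ J : Inst T, IsCore I J := by
  classical
  -- measure of the image of a hom
  set M : ℕ → Prop := fun n =>
    ∃ h : T → T, IsHom h I I ∧
      n = (unSet (img h I)).ncard + (binSet (img h I)).ncard with hM
  have hMne : ∃ n, M n := ⟨_, id, ⟨fun _ _ ht => ht, fun _ _ _ ht => ht⟩, rfl⟩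
  obtain ⟨h, hhom, hmsr⟩ : M (sInf {n | M n}) := Nat.sInf_mem hMne
  set J : Inst T := img h I with hJ
  have hUfin : (unSet J).Finite := by
    rw [hJ, unSet_img]; exact hfin_un.image _
  have hBfin : (binSet J).Finite := by
    rw [hJ, binSet_img]; exact hfin_bin.image _
  -- J is a subinstance of I
  have hsub : SubInst J I := by
    constructor
    · rintro p t ⟨s, hs, rfl⟩; exact hhom.1 p s hs
    · rintro p t s ⟨a, b, hab, rfl, rfl⟩; exact hhom.2 p a b hab
  -- h is a hom from I to J
  have hIJ : IsHom h I J :=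
    ⟨fun p t ht => ⟨t, ht, rfl⟩, fun p t s hts => ⟨t, s, hts, rfl, rfl⟩⟩
  -- terms J is finite
  have hSfin : (terms J).Finite := by
    apply Set.Finite.subset ((hUfin.image Prod.snd).union
      ((hBfin.image (fun x => x.2.1)).union (hBfin.image (fun x => x.2.2))))
    rintro t (⟨p, hp⟩ | ⟨p, s, hp⟩ | ⟨p, s, hp⟩)
    · exact Or.inl ⟨⟨p, t⟩, hp, rfl⟩
    · exact Or.inr (Or.inl ⟨⟨p, t, s⟩, hp, rfl⟩)
    · exact Or.inr (Or.inr ⟨⟨p, s, t⟩, hp, rfl⟩)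
  refine ⟨J, hsub, ⟨h, hIJ⟩, fun g hg => ?_⟩
  -- g∘h is a hom I → I
  have hghI : IsHom (g ∘ h) I I :=
    isHom_comp hIJ ⟨fun p t ht => (hsub.1 p _ (hg.1 p t ht)),
      fun p t s hts => (hsub.2 p _ _ (hg.2 p t s hts))⟩
  -- image of g∘h equals image of g on J
  have himg_un : unSet (img (g ∘ h) I) = (fun pt : ℕ × T => (pt.1, g pt.2)) '' unSet J := by
    rw [unSet_img, hJ, unSet_img, ← Set.image_comp]; rfl
  have himg_bin : binSet (img (g ∘ h) I)
      = (fun x : ℕ × T × T => (x.1, g x.2.1, g x.2.2)) '' binSet J := by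
    rw [binSet_img, hJ, binSet_img, ← Set.image_comp]; rfl
  -- images are subsets (g is a hom J → J)
  have hsub_un : (fun pt : ℕ × T => (pt.1, g pt.2)) '' unSet J ⊆ unSet J := by
    rintro _ ⟨⟨p, t⟩, ht, rfl⟩; exact hg.1 p t ht
  have hsub_bin : (fun x : ℕ × T × T => (x.1, g x.2.1, g x.2.2)) '' binSet J ⊆ binSet J := by
    rintro _ ⟨⟨p, t, s⟩, ht, rfl⟩; exact hg.2 p t s ht
  -- minimality
  have hmin : (unSet J).ncard + (binSet J).ncard ≤
      (unSet (img (g ∘ h) I)).ncard + (binSet (img (g ∘ h) I)).ncard := by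
    rw [← hmsr]
    exact Nat.sInf_le ⟨g ∘ h, hghI, rfl⟩
  have hle_un : (unSet (img (g ∘ h) I)).ncard ≤ (unSet J).ncard := by
    rw [himg_un]; exact Set.ncard_le_ncard hsub_un hUfin
  have hle_bin : (binSet (img (g ∘ h) I)).ncard ≤ (binSet J).ncard := by
    rw [himg_bin]; exact Set.ncard_le_ncard hsub_bin hBfin
  have heq_un : (fun pt : ℕ × T => (pt.1, g pt.2)) '' unSet J = unSet J := by
    apply Set.eq_of_subset_of_ncard_le hsub_un _ hUfin
    rw [← himg_un]; omega
  have heq_bin : (fun x : ℕ × T × T => (x.1, g x.2.1, g x.2.2)) '' binSet J = binSet J := by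
    apply Set.eq_of_subset_of_ncard_le hsub_bin _ hBfin
    rw [← himg_bin]; omega
  -- g maps terms J to terms J
  have hmaps : Set.MapsTo g (terms J) (terms J) := by
    rintro t (⟨p, hp⟩ | ⟨p, s, hp⟩ | ⟨p, s, hp⟩)
    · exact Or.inl ⟨p, hg.1 p t hp⟩
    · exact Or.inr (Or.inl ⟨p, g s, hg.2 p t s hp⟩)
    · exact Or.inr (Or.inr ⟨p, g s, hg.2 p s t hp⟩)
  -- g is surjective on terms J
  have hsurj : Set.SurjOn g (terms J) (terms J) := by
    rintro t (⟨p, hp⟩ | ⟨p, s, hp⟩ | ⟨p, s, hp⟩)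
    · have : (p, t) ∈ (fun pt : ℕ × T => (pt.1, g pt.2)) '' unSet J := by rw [heq_un]; exact hp
      obtain ⟨⟨q, u⟩, hu, heq⟩ := this
      cases heq
      exact ⟨u, Or.inl ⟨q, hu⟩, rfl⟩
    · have : (p, t, s) ∈ (fun x : ℕ × T × T => (x.1, g x.2.1, g x.2.2)) '' binSet J := by
        rw [heq_bin]; exact hp
      obtain ⟨⟨q, a, b⟩, hab, heq⟩ := this
      cases heq
      exact ⟨a, Or.inr (Or.inl ⟨q, b, hab⟩), rfl⟩
    · have : (p, s, t) ∈ (fun x : ℕ × T × T => (x.1, g x.2.1, g x.2.2)) '' binSet J := by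
        rw [heq_bin]; exact hp
      obtain ⟨⟨q, a, b⟩, hab, heq⟩ := this
      cases heq
      exact ⟨b, Or.inr (Or.inr ⟨q, a, hab⟩), rfl⟩
  have hbij : Set.BijOn g (terms J) (terms J) :=
    (hSfin.surjOn_iff_bijOn_of_mapsTo hmaps).mp hsurj
  -- build the inverse: some iterate of g
  haveI : Finite ↥(terms J) := hSfin.to_subtype
  set π : ↥(terms J) ≃ ↥(terms J) :=
    Equiv.ofBijective (fun x => ⟨g x, hmaps x.2⟩)
      ⟨fun a b hab => Subtype.ext (hbij.injOn a.2 b.2 (congrArg Subtype.val hab)),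
       fun y => by
        obtain ⟨x, hx, hgx⟩ := hsurj y.2
        exact ⟨⟨x, hx⟩, Subtype.ext hgx⟩⟩ with hπ
  set n : ℕ := orderOf π with hn
  have hnpos : 0 < n := orderOf_pos π
  have hπn : π ^ n = 1 := pow_orderOf_eq_one π
  -- g^[m] agrees with π^m on terms J
  have hiter : ∀ m, ∀ t (ht : t ∈ terms J), g^[m] t = ((π ^ m) ⟨t, ht⟩ : T) := by
    intro m
    induction m with
    | zero => intro t ht; simp
    | succ m ih =>
        intro t ht
        rw [Function.iterate_succ_apply, pow_succ, Equiv.Perm.mul_apply]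
        exact ih (g t) (hmaps ht)
  have hidn : ∀ t ∈ terms J, g^[n] t = t := by
    intro t ht
    rw [hiter n t ht, hπn]
    rfl
  refine ⟨hg, hbij, g^[n - 1], isHom_iterate hg (n - 1), ?_, ?_⟩
  · -- left inverse on terms J
    intro t ht
    have hn1 : n = (n - 1) + 1 := by omega
    calc g^[n - 1] (g t) = g^[(n - 1) + 1] t := (Function.iterate_succ_apply g (n - 1) t).symm
      _ = g^[n] t := by rw [← hn1]
      _ = t := hidn t ht
  · -- right inverse on terms J
    intro t ht
    have hn1 : n = (n - 1) + 1 := by omega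
    calc g (g^[n - 1] t) = g^[(n - 1) + 1] t := (Function.iterate_succ_apply' g (n - 1) t).symm
      _ = g^[n] t := by rw [← hn1]
      _ = t := hidn t ht
end

section
/- If I and J are instances over a purely non-disjunctive (single-head) rule set R, I homomorphically maps into J, and J satisfies all rules of R (no active triggers), then any chase of I with R produces an instance that homomorphically maps into J. -/
inductive Atom (X : Type) : Type
  | un : ℕ → X → Atom X
  | bin : ℕ → X → X → Atom X

def Atom.map {X Y : Type} (h : X → Y) : Atom X → Atom Y
  | .un p t => .un p (h t)
  | .bin p t s => .bin p (h t) (h s)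

def Atom.vars {X : Type} : Atom X → Set X
  | .un _ t => {t}
  | .bin _ t s => {t, s}

/-- A non-disjunctive (single-head) existential rule, with variables drawn from `ℕ`. -/
structure Rule where
  body : Set (Atom ℕ)
  head : Set (Atom ℕ)

def Rule.bodyVars (ρ : Rule) : Set ℕ := ⋃ a ∈ ρ.body, a.vars

def Rule.headVars (ρ : Rule) : Set ℕ := ⋃ a ∈ ρ.head, a.vars

def termsOf {T : Type} (I : Set (Atom T)) : Set T := ⋃ a ∈ I, a.vars

/-- `J` satisfies all rules of `R`: no active triggers. -/
def Models {T : Type} (J : Set (Atom T)) (R : Set Rule) : Prop :=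
  ∀ ρ ∈ R, ∀ σ : ℕ → T, Atom.map σ '' ρ.body ⊆ J →
    ∃ σ' : ℕ → T, (∀ v ∈ ρ.bodyVars, σ' v = σ v) ∧ Atom.map σ' '' ρ.head ⊆ J

/-- One chase step: apply an active trigger, introducing fresh terms for the
existential variables. -/
def IsStep {T : Type} (R : Set Rule) (I I' : Set (Atom T)) : Prop :=
  ∃ ρ ∈ R, ∃ σ σ' : ℕ → T,
    Atom.map σ '' ρ.body ⊆ I ∧
    (∀ v ∈ ρ.bodyVars, σ' v = σ v) ∧
    (∀ v ∈ ρ.headVars \ ρ.bodyVars, σ' v ∉ termsOf I) ∧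
    Set.InjOn σ' (ρ.headVars \ ρ.bodyVars) ∧
    I' = I ∪ Atom.map σ' '' ρ.head

lemma Atom.map_map {X Y Z : Type} (g : Y → Z) (k : X → Y) (a : Atom X) :
    Atom.map g (Atom.map k a) = Atom.map (g ∘ k) a := by cases a <;> rfl

lemma Atom.map_congr {X Y : Type} {g g' : X → Y} {a : Atom X}
    (h : ∀ t ∈ a.vars, g t = g' t) : Atom.map g a = Atom.map g' a := by
  cases a with
  | un p t => simp [Atom.map, h t (by simp [Atom.vars])]
  | bin p t s =>
      simp [Atom.map, h t (by simp [Atom.vars]), h s (by simp [Atom.vars])]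

lemma mem_termsOf {T : Type} {I : Set (Atom T)} {a : Atom T} (ha : a ∈ I)
    {t : T} (ht : t ∈ a.vars) : t ∈ termsOf I := Set.mem_biUnion ha ht

lemma vars_map {X Y : Type} {σ : X → Y} {a : Atom X} {x : X} (hx : x ∈ a.vars) :
    σ x ∈ (Atom.map σ a).vars := by
  cases a with
  | un p t => simp_all [Atom.vars, Atom.map]
  | bin p t s => rcases hx with h | h <;> simp_all [Atom.vars, Atom.map]

theorem chase_universality {T : Type} (R : Set Rule) (I J : Set (Atom T))
    (f : ℕ → Set (Atom T)) (hf0 : f 0 = I)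
    (hstep : ∀ i, f (i + 1) = f i ∨ IsStep R (f i) (f (i + 1)))
    (h0 : T → T) (hh0 : Atom.map h0 '' I ⊆ J)
    (hJ : Models J R) :
    ∃ h : T → T, Atom.map h '' (⋃ i, f i) ⊆ J := by
  classical
  -- monotonicity of f
  have fmono : ∀ i j, i ≤ j → f i ⊆ f j := by
    intro i j hij
    induction j, hij using Nat.le_induction with
    | base => exact le_rfl
    | succ j hij ih =>
        refine ih.trans ?_
        rcases hstep j with h | ⟨ρ, _, σ, σ', _, _, _, _, heq⟩
        · rw [h]
        · rw [heq]; exact Set.subset_union_left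
  -- key step lemma
  have key : ∀ i (g : T → T), Atom.map g '' f i ⊆ J →
      ∃ g' : T → T, Atom.map g' '' f (i+1) ⊆ J ∧ ∀ t ∈ termsOf (f i), g' t = g t := by
    intro i g hg
    rcases hstep i with h | ⟨ρ, hρR, σ, σ', hbody, hagree, hfresh, hinj, heq⟩
    · exact ⟨g, by rw [h]; exact hg, fun t _ => rfl⟩
    · have hbodyJ : Atom.map (g ∘ σ) '' ρ.body ⊆ J := by
        rintro _ ⟨a, ha, rfl⟩
        rw [← Atom.map_map]
        exact hg ⟨Atom.map σ a, hbody ⟨a, ha, rfl⟩, rfl⟩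
      obtain ⟨σ'', hσ''agree, hσ''head⟩ := hJ ρ hρR (g ∘ σ) hbodyJ
      set S := ρ.headVars \ ρ.bodyVars with hS
      refine ⟨fun t => if ht : t ∈ σ' '' S then σ'' ht.choose else g t, ?_, ?_⟩
      · rw [heq]
        rintro _ ⟨a, ha | ⟨b, hb, rfl⟩, rfl⟩
        · -- old atom
          have : (Atom.map (fun t => if ht : t ∈ σ' '' S then σ'' ht.choose else g t) a)
              = Atom.map g a := by
            apply Atom.map_congr
            intro t htv
            have htm : t ∈ termsOf (f i) := mem_termsOf ha htv
            have : t ∉ σ' '' S := by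
              rintro ⟨v, hv, rfl⟩
              exact hfresh v hv htm
            simp [this]
          rw [this]
          exact hg ⟨a, ha, rfl⟩
        · -- new atom
          have hcomp : ∀ v ∈ ρ.headVars,
              (fun t => if ht : t ∈ σ' '' S then σ'' ht.choose else g t) (σ' v) = σ'' v := by
            intro v hv
            by_cases hvb : v ∈ ρ.bodyVars
            · have hσσ' : σ' v = σ v := hagree v hvb
              -- σ v is a term of f i
              have hterm : σ v ∈ termsOf (f i) := by
                rcases Set.mem_iUnion₂.1 hvb with ⟨a, ha, hva⟩
                exact mem_termsOf (hbody ⟨a, ha, rfl⟩) (vars_map hva)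
              have hnot : σ v ∉ σ' '' S := by
                rintro ⟨w, hw, hwe⟩
                exact hfresh w hw (hwe ▸ hterm)
              rw [hσσ']
              simp only [hnot, dif_neg, not_false_iff]
              exact (hσ''agree v hvb).symm
            · have hvS : v ∈ S := ⟨hv, hvb⟩
              have hmem : σ' v ∈ σ' '' S := ⟨v, hvS, rfl⟩
              simp only [hmem, dif_pos]
              have hc := hmem.choose_spec
              have : hmem.choose = v := hinj hc.1 hvS hc.2
              rw [this]
          have : Atom.map (fun t => if ht : t ∈ σ' '' S then σ'' ht.choose else g t)
              (Atom.map σ' b) = Atom.map σ'' b := by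
            rw [Atom.map_map]
            apply Atom.map_congr
            intro t htv
            exact hcomp t (Set.mem_biUnion hb htv)
          rw [this]
          exact hσ''head ⟨b, hb, rfl⟩
      · intro t ht
        have : t ∉ σ' '' S := by
          rintro ⟨v, hv, rfl⟩
          exact hfresh v hv ht
        simp [this]
  choose! F hF1 hF2 using key
  -- the sequence of homomorphisms
  set g : ℕ → T → T := fun n => Nat.rec h0 (fun i gi => F i gi) n with hg
  have hgJ : ∀ i, Atom.map (g i) '' f i ⊆ J := by
    intro i
    induction i with
    | zero => rw [hf0]; exact hh0
    | succ i ih => exact hF1 i (g i) ih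
  have hgagree : ∀ i j, i ≤ j → ∀ t ∈ termsOf (f i), g j t = g i t := by
    intro i j hij
    induction j, hij using Nat.le_induction with
    | base => intro t _; rfl
    | succ j hij ih =>
        intro t ht
        have htj : t ∈ termsOf (f j) := by
          rcases Set.mem_iUnion₂.1 ht with ⟨a, ha, hta⟩
          exact mem_termsOf (fmono i j hij ha) hta
        exact (hF2 j (g j) (hgJ j) t htj).trans (ih t ht)
  -- global homomorphism
  refine ⟨fun t => if ht : ∃ i, t ∈ termsOf (f i) then g (Nat.find ht) t else h0 t, ?_⟩
  rintro _ ⟨a, ha, rfl⟩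
  rcases Set.mem_iUnion.1 ha with ⟨i, hai⟩
  have : Atom.map (fun t => if ht : ∃ i, t ∈ termsOf (f i) then g (Nat.find ht) t else h0 t) a
      = Atom.map (g i) a := by
    apply Atom.map_congr
    intro t htv
    have hex : ∃ k, t ∈ termsOf (f k) := ⟨i, mem_termsOf hai htv⟩
    simp only [hex, dif_pos]
    have hk : t ∈ termsOf (f (Nat.find hex)) := Nat.find_spec hex
    calc g (Nat.find hex) t = g (max (Nat.find hex) i) t :=
          (hgagree _ _ (le_max_left _ _) t hk).symm
      _ = g i t := hgagree i _ (le_max_right _ _) t (mem_termsOf hai htv)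
  rw [this]
  exact hgJ i ⟨a, hai, rfl⟩
end
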